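/- Let k ≥ 2 be an integer and G a simple graph with β := β^k(G) > 0. Then the minimum degree satisfies δ(G) ≥ (β + 1)k − 1. -/

import Mathlib

open Finset
open scoped Classical

variable {V : Type*}

/-- The k-th neighborhood: vertices adjacent to at least `k` vertices of `S`. -/
noncomputable def kNbhd [Fintype V] (G : SimpleGraph V) (k : ℕ) (S : Finset V) : Finset V :=
  Finset.univ.filter fun v => k ≤ (S.filter fun u => G.Adj v u).card

/-- The k-th binding number. -/
noncomputable def bindingNum [Fintype V] (G : SimpleGraph V) (k : ℕ) : ℝ :=
  if h : (Finset.univ.filter fun S : Finset V =>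
      k ≤ S.card ∧ kNbhd G k S ≠ Finset.univ).Nonempty then
    (Finset.univ.filter fun S : Finset V =>
      k ≤ S.card ∧ kNbhd G k S ≠ Finset.univ).inf' h
      fun S => ((kNbhd G k S).card : ℝ) / (S.card : ℝ)
  else 0

lemma mem_kNbhd_card_eq [Fintype V] {G : SimpleGraph V} {k : ℕ} {S : Finset V}
    (hS : S.card = k) {u : V} (hu : u ∈ kNbhd G k S) :
    u ∉ S ∧ ∀ w ∈ S, G.Adj u w := by
  simp only [kNbhd, mem_filter, mem_univ, true_and] at hu
  have hfil : S.filter (fun w => G.Adj u w) = S := by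
    apply Finset.eq_of_subset_of_card_le (filter_subset _ _)
    calc S.card = k := hS
    _ ≤ _ := hu
  have hall : ∀ w ∈ S, G.Adj u w := fun w hw => (Finset.mem_filter.mp (hfil ▸ hw)).2
  exact ⟨fun huS => G.irrefl (hall u huS), hall⟩

lemma bindingNum_le [Fintype V] {G : SimpleGraph V} {k : ℕ} {S : Finset V}
    (h1 : k ≤ S.card) (h2 : kNbhd G k S ≠ Finset.univ) :
    bindingNum G k ≤ ((kNbhd G k S).card : ℝ) / S.card := by
  have hmem : S ∈ Finset.univ.filter fun S : Finset V =>
      k ≤ S.card ∧ kNbhd G k S ≠ Finset.univ := by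
    simp [h1, h2]
  rw [bindingNum, dif_pos ⟨S, hmem⟩]
  exact Finset.inf'_le _ hmem

theorem stmt_4 [Fintype V] (k : ℕ) (hk : 2 ≤ k) (G : SimpleGraph V)
    (hβ : 0 < bindingNum G k) :
    ∀ v : V, (bindingNum G k + 1) * k - 1 ≤ ((G.neighborSet v).ncard : ℝ) := by
  intro v
  have hV : k ≤ Fintype.card V := by
    by_contra hlt
    push_neg at hlt
    have hne : ¬ (Finset.univ.filter fun S : Finset V =>
        k ≤ S.card ∧ kNbhd G k S ≠ Finset.univ).Nonempty := by
      rintro ⟨S, hS⟩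
      simp only [Finset.mem_filter] at hS
      exact absurd (hS.2.1.trans (S.card_le_univ.trans_eq Finset.card_univ)) (not_le.mpr hlt)
    rw [bindingNum, dif_neg hne] at hβ
    exact lt_irrefl 0 hβ
  set d := (G.neighborFinset v).card with hd
  have hncard : ((G.neighborSet v).ncard : ℝ) = (d : ℝ) := by
    rw [Set.ncard_eq_toFinset_card', hd, SimpleGraph.neighborFinset_def]
  rw [hncard]
  have hkpos : (0 : ℝ) < k := by positivity
  by_cases hcase : k - 1 ≤ d
  · obtain ⟨A, hAsub, hAcard⟩ := Finset.exists_subset_card_eq (s := G.neighborFinset v) (n := k-1) hcase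
    have hvA : v ∉ A := fun h => G.irrefl ((G.mem_neighborFinset v v).mp (hAsub h))
    set S := insert v A with hSdef
    have hScard : S.card = k := by
      rw [hSdef, Finset.card_insert_of_notMem hvA, hAcard]
      omega
    have hsub : kNbhd G k S ⊆ G.neighborFinset v \ A := by
      intro u hu
      obtain ⟨huS, hall⟩ := mem_kNbhd_card_eq hScard hu
      have hadjv : G.Adj u v := hall v (Finset.mem_insert_self v A)
      rw [Finset.mem_sdiff, SimpleGraph.mem_neighborFinset]
      exact ⟨hadjv.symm, fun h => huS (Finset.mem_insert_of_mem h)⟩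
    have hne : kNbhd G k S ≠ Finset.univ := by
      intro h
      exact (mem_kNbhd_card_eq hScard (h ▸ Finset.mem_univ v)).1 (Finset.mem_insert_self v A)
    have hle := bindingNum_le (le_of_eq hScard.symm) hne
    rw [hScard] at hle
    have hcardle : (kNbhd G k S).card ≤ d - (k - 1) := by
      calc (kNbhd G k S).card ≤ (G.neighborFinset v \ A).card := Finset.card_le_card hsub
      _ = d - (k-1) := by rw [Finset.card_sdiff_of_subset hAsub, hAcard]
    have hcast : ((d - (k-1) : ℕ) : ℝ) = (d : ℝ) - ((k : ℝ) - 1) := by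
      rw [Nat.cast_sub hcase, Nat.cast_sub (by omega : 1 ≤ k)]
      norm_num
    have h2 : bindingNum G k ≤ ((d : ℝ) - ((k : ℝ) - 1)) / k := by
      refine hle.trans ?_
      gcongr
      calc ((kNbhd G k S).card : ℝ) ≤ ((d - (k-1) : ℕ) : ℝ) := by exact_mod_cast hcardle
        _ = _ := hcast
    rw [le_div_iff₀ hkpos] at h2
    nlinarith [h2]
  · -- d < k - 1: derive contradiction, bindingNum ≤ 0
    push_neg at hcase
    have hins : (insert v (G.neighborFinset v)).card ≤ k := by
      have : (insert v (G.neighborFinset v)).card ≤ d + 1 := Finset.card_insert_le _ _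
      omega
    obtain ⟨S, hSsub, hScard⟩ := Finset.exists_superset_card_eq hins hV
    have hempty : kNbhd G k S = ∅ := by
      rw [Finset.eq_empty_iff_forall_notMem]
      intro u hu
      obtain ⟨huS, hall⟩ := mem_kNbhd_card_eq hScard hu
      have hadjv : G.Adj u v := hall v (hSsub (Finset.mem_insert_self _ _))
      exact huS (hSsub (Finset.mem_insert_of_mem ((G.mem_neighborFinset v u).mpr hadjv.symm)))
    have hne : kNbhd G k S ≠ Finset.univ := by
      rw [hempty]
      intro h
      have : v ∈ (∅ : Finset V) := h ▸ Finset.mem_univ v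
      simp at this
    have hle := bindingNum_le (le_of_eq hScard.symm) hne
    rw [hempty] at hle
    simp at hle
    linarith
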